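/- Let s₁, s₂ : [0,T] → ℝ be differentiable functions solving the slow-down system, i.e. s₁'(t) = L·s₁(t)·(s₁(t)² + s₂(t)²)^α and s₂'(t) = −L·s₂(t)·(s₁(t)² + s₂(t)²)^α for all t ∈ [0,T], with s₁(t) > 0 and s₂(t) > 0 for all t ∈ [0,T]. Let 0 < T₁ ≤ T and suppose s₁(t) ≤ s₂(t) for all t ∈ [0,T₁]. Then for all 0 ≤ a ≤ t ≤ T₁ one has s₂(t) ≥ s₂(a)·(1 + 2^α·C₀·s₂(a)^{2α}·(t−a))^{−1/(2α)}. -/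

import Mathlib

/-- Lemma "s1 and s2 approx" (a): lower bound on `s₂` along a solution of the
slow-down system `s₁' = L s₁ (s₁² + s₂²)^α`, `s₂' = -L s₂ (s₁² + s₂²)^α`,
where `L = (log λ) (p/2)^{2α}` and `C₀ = 2 α L`, on an interval `[0, T₁]`
where `s₁ ≤ s₂`. -/
theorem slowdown_s2_lower_bound
    (lam α : ℝ) (hlam : 1 < lam) (hα : α ∈ Set.Ioo (0 : ℝ) 1)
    (p : ℤ) (hp : 3 ≤ p)
    (L C₀ : ℝ)
    (hL : L = Real.log lam * ((p : ℝ) / 2) ^ (2 * α))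
    (hC₀ : C₀ = 2 * α * L)
    (T : ℝ) (s₁ s₂ : ℝ → ℝ)
    (hs₁ : ∀ t ∈ Set.Icc (0 : ℝ) T,
      HasDerivAt s₁ (L * s₁ t * (s₁ t ^ 2 + s₂ t ^ 2) ^ α) t)
    (hs₂ : ∀ t ∈ Set.Icc (0 : ℝ) T,
      HasDerivAt s₂ (-(L * s₂ t * (s₁ t ^ 2 + s₂ t ^ 2) ^ α)) t)
    (hpos₁ : ∀ t ∈ Set.Icc (0 : ℝ) T, 0 < s₁ t)
    (hpos₂ : ∀ t ∈ Set.Icc (0 : ℝ) T, 0 < s₂ t)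
    (T₁ : ℝ) (hT₁pos : 0 < T₁) (hT₁T : T₁ ≤ T)
    (horder : ∀ t ∈ Set.Icc (0 : ℝ) T₁, s₁ t ≤ s₂ t)
    (a t : ℝ) (ha : 0 ≤ a) (hat : a ≤ t) (htT₁ : t ≤ T₁) :
    s₂ a * (1 + 2 ^ α * C₀ * s₂ a ^ (2 * α) * (t - a)) ^ (-(1 / (2 * α))) ≤ s₂ t := by
  obtain ⟨hα0, hα1⟩ := hα
  have hLpos : 0 < L := by
    rw [hL]
    apply mul_pos (Real.log_pos hlam)
    apply Real.rpow_pos_of_pos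
    have : (3:ℝ) ≤ (p:ℝ) := by exact_mod_cast hp
    linarith
  set M : ℝ := 2 ^ α * C₀ with hM
  have hMpos : 0 < M := by
    apply mul_pos (Real.rpow_pos_of_pos two_pos α)
    rw [hC₀]; positivity
  -- membership lemmas
  have hsub : Set.Icc a t ⊆ Set.Icc (0:ℝ) T := fun x hx =>
    ⟨le_trans ha hx.1, le_trans hx.2 (le_trans htT₁ hT₁T)⟩
  have hsub₁ : Set.Icc a t ⊆ Set.Icc (0:ℝ) T₁ := fun x hx =>
    ⟨le_trans ha hx.1, le_trans hx.2 htT₁⟩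
  set c : ℝ := -(2*α) with hc
  set w : ℝ → ℝ := fun x => s₂ x ^ c with hw
  set w' : ℝ → ℝ := fun x => 2*α*L * (s₁ x ^ 2 + s₂ x ^ 2) ^ α * s₂ x ^ c with hw'
  have hderiv : ∀ x ∈ Set.Icc a t, HasDerivWithinAt w (w' x) (Set.Icc a t) x := by
    intro x hx
    have hxT := hsub hx
    have hspos := hpos₂ x hxT
    have h1 : HasDerivAt w
        ((-(L * s₂ x * (s₁ x ^ 2 + s₂ x ^ 2) ^ α)) * c * s₂ x ^ (c - 1)) x :=
      (hs₂ x hxT).rpow_const (Or.inl (ne_of_gt hspos))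
    have heq : (-(L * s₂ x * (s₁ x ^ 2 + s₂ x ^ 2) ^ α)) * c * s₂ x ^ (c - 1) = w' x := by
      have : s₂ x ^ c = s₂ x ^ (c - 1) * s₂ x := by
        rw [← Real.rpow_add_one (ne_of_gt hspos)]; ring_nf
      simp only [hw']; rw [this]; simp only [hc]; ring
    rw [heq] at h1
    exact h1.hasDerivWithinAt
  have hbound : ∀ x ∈ Set.Icc a t, ‖w' x‖ ≤ M := by
    intro x hx
    have hxT := hsub hx
    have hspos := hpos₂ x hxT
    have h1pos := hpos₁ x hxT
    have hord := horder x (hsub₁ hx)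
    have hXle : (s₁ x ^ 2 + s₂ x ^ 2) ^ α ≤ 2 ^ α * s₂ x ^ (2*α) := by
      have h2 : s₁ x ^ 2 + s₂ x ^ 2 ≤ 2 * s₂ x ^ 2 := by nlinarith
      have h3 : (s₁ x ^ 2 + s₂ x ^ 2) ^ α ≤ (2 * s₂ x ^ 2) ^ α :=
        Real.rpow_le_rpow (by positivity) h2 hα0.le
      have h4 : (2 * s₂ x ^ 2 : ℝ) ^ α = 2 ^ α * s₂ x ^ (2*α) := by
        rw [Real.mul_rpow (by norm_num) (by positivity)]
        congr 1
        rw [← Real.rpow_natCast (s₂ x) 2, ← Real.rpow_mul hspos.le]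
        norm_num [mul_comm]
      rw [h4] at h3; exact h3
    have hnn : 0 ≤ w' x := by
      simp only [hw']
      have := Real.rpow_pos_of_pos hspos c
      positivity
    rw [Real.norm_eq_abs, abs_of_nonneg hnn]
    have : w' x ≤ 2*α*L * (2 ^ α * s₂ x ^ (2*α)) * s₂ x ^ c := by
      simp only [hw']
      apply mul_le_mul_of_nonneg_right _ (Real.rpow_pos_of_pos hspos c).le
      apply mul_le_mul_of_nonneg_left hXle (by positivity)
    have hcollapse : s₂ x ^ (2*α) * s₂ x ^ c = 1 := by
      rw [← Real.rpow_add hspos, hc]; simp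
    calc w' x ≤ 2*α*L * (2 ^ α * s₂ x ^ (2*α)) * s₂ x ^ c := this
      _ = 2 ^ α * (2*α*L) * (s₂ x ^ (2*α) * s₂ x ^ c) := by ring
      _ = M := by rw [hcollapse, hM, hC₀]; ring
  have hmv : ‖w t - w a‖ ≤ M * ‖t - a‖ :=
    (convex_Icc a t).norm_image_sub_le_of_norm_hasDerivWithin_le hderiv hbound
      (Set.left_mem_Icc.2 hat) (Set.right_mem_Icc.2 hat)
  have hwle : w t ≤ w a + M * (t - a) := by
    rw [Real.norm_eq_abs, Real.norm_eq_abs, abs_of_nonneg (sub_nonneg.2 hat)] at hmv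
    have := le_of_abs_le hmv
    linarith
  -- positivity facts
  have haT : a ∈ Set.Icc (0:ℝ) T := ⟨ha, by linarith⟩
  have htT : t ∈ Set.Icc (0:ℝ) T := ⟨by linarith, by linarith⟩
  have hsa := hpos₂ a haT
  have hst := hpos₂ t htT
  have hwtpos : 0 < w t := Real.rpow_pos_of_pos hst c
  -- rewrite RHS
  have hkey : s₂ a * (1 + M * s₂ a ^ (2*α) * (t - a)) ^ (-(1/(2*α)))
      = (w a + M * (t - a)) ^ (-(1/(2*α))) := by
    have hwa : w a = s₂ a ^ c := rfl
    have hfact : w a + M * (t - a) = s₂ a ^ c * (1 + M * s₂ a ^ (2*α) * (t - a)) := by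
      rw [hwa]
      have : s₂ a ^ c * (M * s₂ a ^ (2*α) * (t-a)) = M * (t-a) * (s₂ a ^ c * s₂ a ^ (2*α)) := by
        ring
      have hcol : s₂ a ^ c * s₂ a ^ (2*α) = 1 := by
        rw [← Real.rpow_add hsa, hc]; simp
      rw [mul_add, mul_one, this, hcol, mul_one]
    rw [hfact, Real.mul_rpow (Real.rpow_pos_of_pos hsa c).le (by nlinarith [mul_nonneg (mul_nonneg hMpos.le (Real.rpow_pos_of_pos hsa (2*α)).le) (sub_nonneg.2 hat)])]
    congr 1
    rw [← Real.rpow_mul hsa.le]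
    have : c * -(1/(2*α)) = 1 := by
      rw [hc]; field_simp
    rw [this, Real.rpow_one]
  have hmono : (w a + M * (t - a)) ^ (-(1/(2*α))) ≤ (w t) ^ (-(1/(2*α))) :=
    Real.rpow_le_rpow_of_nonpos hwtpos hwle (neg_nonpos.mpr (by positivity))
  have hwt : (w t) ^ (-(1/(2*α))) = s₂ t := by
    show (s₂ t ^ c) ^ (-(1/(2*α))) = s₂ t
    rw [← Real.rpow_mul hst.le]
    have hone : c * -(1/(2*α)) = 1 := by rw [hc]; field_simp
    rw [hone, Real.rpow_one]
  calc s₂ a * (1 + M * s₂ a ^ (2*α) * (t - a)) ^ (-(1/(2*α)))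
      = (w a + M * (t - a)) ^ (-(1/(2*α))) := hkey
    _ ≤ (w t) ^ (-(1/(2*α))) := hmono
    _ = s₂ t := hwt
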